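/- Let M be a nonempty set and 𝔄(M) a σ-algebra of subsets of M. The function f_E : M → ℝ induced by any spectral family E : ℝ → 𝔄(M) is 𝔄(M)-measurable (with respect to the Borel σ-algebra on ℝ). -/

import Mathlib

/-- The function induced by a spectral family in a σ-algebra of subsets
of a nonempty set `M` is measurable. -/
theorem spectral_family_induced_function_measurable
    {M : Type*} [MeasurableSpace M] [Nonempty M] (E : ℝ → Set M)
    (hmeas : ∀ l : ℝ, MeasurableSet (E l))
    (hmono : Monotone E)
    (hright : ∀ l : ℝ, E l = ⋂ μ ∈ Set.Ioi l, E μ)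
    (hbot : (⋂ l : ℝ, E l) = ∅)
    (htop : (⋃ l : ℝ, E l) = Set.univ) :
    Measurable (fun x => sInf {μ : ℝ | x ∈ E μ}) := by
  -- For each x, the set S x = {μ | x ∈ E μ} is nonempty and bounded below.
  have hne : ∀ x : M, {μ : ℝ | x ∈ E μ}.Nonempty := by
    intro x
    have : x ∈ ⋃ l : ℝ, E l := htop ▸ Set.mem_univ x
    simpa [Set.mem_iUnion, Set.Nonempty] using this
  have hbdd : ∀ x : M, BddBelow {μ : ℝ | x ∈ E μ} := by
    intro x
    have : x ∉ ⋂ l : ℝ, E l := by simp [hbot]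
    rw [Set.mem_iInter] at this
    push_neg at this
    obtain ⟨l, hl⟩ := this
    refine ⟨l, fun ν hν => ?_⟩
    by_contra h
    push_neg at h
    exact hl (hmono h.le hν)
  -- Sublevel sets are exactly E l.
  have key : ∀ l : ℝ, {x | sInf {μ : ℝ | x ∈ E μ} ≤ l} = E l := by
    intro l
    ext x
    simp only [Set.mem_setOf_eq]
    constructor
    · intro h
      rw [hright l]
      simp only [Set.mem_iInter, Set.mem_Ioi]
      intro μ hμ
      have hlt : sInf {ν : ℝ | x ∈ E ν} < μ := lt_of_le_of_lt h hμ
      obtain ⟨ν, hν, hνμ⟩ := (csInf_lt_iff (hbdd x) (hne x)).mp hlt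
      exact hmono hνμ.le hν
    · intro h
      exact csInf_le (hbdd x) h
  apply measurable_of_Iic
  intro l
  have : (fun x => sInf {μ : ℝ | x ∈ E μ}) ⁻¹' Set.Iic l = E l := by
    rw [← key l]; rfl
  rw [this]
  exact hmeas l
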